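/- arXiv:1805.10658 — 2 statements merged into one kernel-verified Lean document; each statement's English description precedes it below -/
import Mathlib

section
/- Let p ≥ 2, q > 0, and let μ be a probability measure on (−∞,0] with μ^(pq) := ∫_{(−∞,0]} e^{−pqα} μ(dα) < ∞. Let X : ℝ → ℝ^d be measurable with restriction ζ = X|_{(−∞,0]} ∈ C_q((−∞,0]; ℝ^d) and |X| locally bounded on [0,∞). Then for every t ≥ 0, ∫_0^t ∫_{(−∞,0]} |X(s+α)|^p μ(dα) ds ≤ (μ^(pq)/(pq))·‖ζ‖_q^p + ∫_0^t |X(s)|^p ds. -/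
open MeasureTheory

theorem stmt_8 {d : ℕ} (p q : ℝ) (hp : 2 ≤ p) (hq : 0 < q)
    (μ : Measure ℝ) [IsProbabilityMeasure μ] (hsupp : μ (Set.Ioi 0) = 0)
    (hμpq : ∫⁻ α, ENNReal.ofReal (Real.exp (-(p * q) * α)) ∂μ < ⊤)
    (X : ℝ → EuclideanSpace ℝ (Fin d)) (hX : Measurable X)
    (hζbdd : BddAbove (Set.range fun α : Set.Iic (0:ℝ) => Real.exp (q * α) * ‖X α‖))
    (hloc : ∀ T > (0:ℝ), ∃ M : ℝ, ∀ s ∈ Set.Icc 0 T, ‖X s‖ ≤ M)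
    (t : ℝ) (ht : 0 ≤ t) :
    ∫⁻ s in Set.Ioc 0 t, ∫⁻ α, ENNReal.ofReal (‖X (s + α)‖ ^ p) ∂μ ≤
      (∫⁻ α, ENNReal.ofReal (Real.exp (-(p * q) * α)) ∂μ) / ENNReal.ofReal (p * q) *
          ENNReal.ofReal ((⨆ α : Set.Iic (0:ℝ), Real.exp (q * α) * ‖X α‖) ^ p) +
        ∫⁻ s in Set.Ioc 0 t, ENNReal.ofReal (‖X s‖ ^ p) := by
  have hr : 0 < p * q := by nlinarith
  set r := p * q with hrdef
  set M := ⨆ α : Set.Iic (0:ℝ), Real.exp (q * α) * ‖X α‖ with hMdef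
  have hp0 : (0:ℝ) ≤ p := by linarith
  have hM0 : (0:ℝ) ≤ M := by
    refine le_trans ?_ (le_ciSup hζbdd ⟨0, Set.self_mem_Iic⟩)
    positivity
  -- pointwise bound on the past
  have hXb : ∀ u : ℝ, u ≤ 0 → ‖X u‖ ^ p ≤ Real.exp (-r * u) * M ^ p := by
    intro u hu
    have h1 : Real.exp (q * u) * ‖X u‖ ≤ M := le_ciSup hζbdd ⟨u, hu⟩
    have h2 : ‖X u‖ ≤ Real.exp (-(q * u)) * M := by
      rw [Real.exp_neg, inv_mul_eq_div, le_div_iff₀ (Real.exp_pos _)]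
      linarith [h1]
    calc ‖X u‖ ^ p ≤ (Real.exp (-(q * u)) * M) ^ p :=
          Real.rpow_le_rpow (norm_nonneg _) h2 hp0
      _ = Real.exp (-(q * u)) ^ p * M ^ p :=
          Real.mul_rpow (Real.exp_pos _).le hM0
      _ = Real.exp (-r * u) * M ^ p := by
          rw [← Real.exp_mul, hrdef]; ring_nf
  have hexpm : Measurable fun α : ℝ => ENNReal.ofReal (Real.exp (-r * α)) :=
    (Real.measurable_exp.comp (measurable_id'.const_mul (-r))).ennreal_ofReal
  have hXm : Measurable fun u : ℝ => ENNReal.ofReal (‖X u‖ ^ p) :=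
    (((Real.continuous_rpow_const hp0).measurable.comp hX.norm).ennreal_ofReal)
  set h : ℝ → ENNReal := Set.indicator (Set.Ioc 0 t) (fun u => ENNReal.ofReal (‖X u‖ ^ p))
    with hhdef
  have hhm : Measurable h := hXm.indicator measurableSet_Ioc
  set Iμ := ∫⁻ α, ENNReal.ofReal (Real.exp (-r * α)) ∂μ with hIμ
  set C := ENNReal.ofReal (M ^ p) with hC
  have hGm : Measurable fun s : ℝ => ∫⁻ α, h (s + α) ∂μ :=
    Measurable.lintegral_prod_right (hhm.comp (measurable_fst.add measurable_snd))
  have hae : ∀ᵐ α ∂μ, α ≤ 0 := by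
    rw [ae_iff]
    simpa [not_le, Set.Ioi] using hsupp
  -- step 1: bound the inner integral for each s ∈ Ioc 0 t
  have step1 : ∀ s ∈ Set.Ioc (0:ℝ) t,
      ∫⁻ α, ENNReal.ofReal (‖X (s + α)‖ ^ p) ∂μ ≤
        ENNReal.ofReal (Real.exp (-r * s)) * (Iμ * C) + ∫⁻ α, h (s + α) ∂μ := by
    intro s hs
    have key : ∫⁻ α, ENNReal.ofReal (‖X (s + α)‖ ^ p) ∂μ ≤
        ∫⁻ α, (ENNReal.ofReal (Real.exp (-r * s)) *
          (ENNReal.ofReal (Real.exp (-r * α)) * C) + h (s + α)) ∂μ := by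
      refine lintegral_mono_ae (hae.mono fun α hα => ?_)
      by_cases hsa : s + α ≤ 0
      · refine le_trans ?_ le_self_add
        rw [hC, ← ENNReal.ofReal_mul (Real.exp_pos _).le, ← ENNReal.ofReal_mul (Real.exp_pos _).le]
        refine ENNReal.ofReal_le_ofReal ?_
        calc ‖X (s + α)‖ ^ p ≤ Real.exp (-r * (s + α)) * M ^ p := hXb (s + α) hsa
          _ = Real.exp (-r * s) * (Real.exp (-r * α) * M ^ p) := by
              rw [show -r * (s + α) = -r * s + -r * α by ring, Real.exp_add, mul_assoc]
      · refine le_trans ?_ le_add_self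
        push_neg at hsa
        rw [hhdef, Set.indicator_of_mem (Set.mem_Ioc.mpr ⟨hsa, by linarith [hs.2]⟩)]
    refine key.trans (le_of_eq ?_)
    rw [lintegral_add_right _ (show Measurable fun α : ℝ => h (s + α) from hhm.comp (measurable_const.add measurable_id'))]
    congr 1
    rw [lintegral_const_mul _ (hexpm.mul_const C), lintegral_mul_const _ hexpm]
  -- step 2: integrate over s
  have hc1 : Measurable fun s : ℝ => ENNReal.ofReal (Real.exp (-r * s)) := hexpm
  have step2 : ∫⁻ s in Set.Ioc 0 t, ∫⁻ α, ENNReal.ofReal (‖X (s + α)‖ ^ p) ∂μ ≤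
      (∫⁻ s in Set.Ioc 0 t, ENNReal.ofReal (Real.exp (-r * s))) * (Iμ * C) +
        ∫⁻ s in Set.Ioc 0 t, ∫⁻ α, h (s + α) ∂μ := by
    refine le_trans (setLIntegral_mono ((hc1.mul_const _).add hGm) step1) (le_of_eq ?_)
    simp only [Pi.add_apply]
    rw [lintegral_add_right _ hGm, lintegral_mul_const _ hc1]
  refine step2.trans ?_
  gcongr ?_ + ?_
  · -- exponential mass
    have hA : (∫⁻ s in Set.Ioc 0 t, ENNReal.ofReal (Real.exp (-r * s))) ≤
        (ENNReal.ofReal r)⁻¹ := by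
      refine le_trans (lintegral_mono' (Measure.restrict_mono Set.Ioc_subset_Ioi_self le_rfl)
        le_rfl) ?_
      have hint : IntegrableOn (fun s : ℝ => Real.exp (-r * s)) (Set.Ioi 0) := by
        simpa using exp_neg_integrableOn_Ioi 0 hr
      have hval : ∫ s in Set.Ioi (0:ℝ), Real.exp (-r * s) = r⁻¹ := by
        have := MeasureTheory.integral_comp_mul_left_Ioi (fun y => Real.exp (-y)) 0 hr
        simp only [mul_zero] at this
        rw [integral_exp_neg_Ioi_zero] at this
        simpa [mul_zero, integral_exp_neg_Ioi_zero] using this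
      rw [← ofReal_integral_eq_lintegral_ofReal hint
        (Filter.Eventually.of_forall fun s => (Real.exp_pos _).le), hval,
        ← ENNReal.ofReal_inv_of_pos hr]
    calc (∫⁻ s in Set.Ioc 0 t, ENNReal.ofReal (Real.exp (-r * s))) * (Iμ * C)
        ≤ (ENNReal.ofReal r)⁻¹ * (Iμ * C) := by gcongr
      _ = Iμ / ENNReal.ofReal r * C := by rw [div_eq_mul_inv]; ring
  · -- shift term
    have swap : ∫⁻ s : ℝ, ∫⁻ α, h (s + α) ∂μ =
        ∫⁻ α, ∫⁻ s : ℝ, h (s + α) ∂volume ∂μ := by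
      exact lintegral_lintegral_swap
        ((hhm.comp (measurable_fst.add measurable_snd)).aemeasurable)
    calc ∫⁻ s in Set.Ioc 0 t, ∫⁻ α, h (s + α) ∂μ
        ≤ ∫⁻ s : ℝ, ∫⁻ α, h (s + α) ∂μ := setLIntegral_le_lintegral _ _
      _ = ∫⁻ α, ∫⁻ s : ℝ, h (s + α) ∂volume ∂μ := swap
      _ = ∫⁻ α, (∫⁻ s : ℝ, h s) ∂μ := by
          congr 1; ext α; exact lintegral_add_right_eq_self h α
      _ = ∫⁻ s : ℝ, h s := by rw [lintegral_const, measure_univ, mul_one]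
      _ = ∫⁻ s in Set.Ioc 0 t, ENNReal.ofReal (‖X s‖ ^ p) := by
          rw [hhdef, lintegral_indicator measurableSet_Ioc]
end

section
/- Let p ≥ 2, q > 0, 0 < λ < p·q, and let μ be a probability measure on (−∞,0] with μ^(pq) := ∫_{(−∞,0]} e^{−pqα} μ(dα) < ∞. Let X : ℝ → ℝ^d be measurable with ζ = X|_{(−∞,0]} ∈ C_q((−∞,0]; ℝ^d) and |X| locally bounded on [0,∞). Then for every t ≥ 0, ∫_0^t ∫_{(−∞,0]} e^{λs}|X(s+α)|^p μ(dα) ds ≤ (μ^(pq)/(pq−λ))·‖ζ‖_q^p + μ^(pq)·∫_0^t e^{λs}|X(s)|^p ds. -/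
open MeasureTheory

theorem stmt_9 {d : ℕ} (p q lam : ℝ) (hp : 2 ≤ p) (hq : 0 < q)
    (hlam : 0 < lam) (hlampq : lam < p * q)
    (μ : Measure ℝ) [IsProbabilityMeasure μ] (hsupp : μ (Set.Ioi 0) = 0)
    (hμpq : ∫⁻ α, ENNReal.ofReal (Real.exp (-(p * q) * α)) ∂μ < ⊤)
    (X : ℝ → EuclideanSpace ℝ (Fin d)) (hX : Measurable X)
    (hζbdd : BddAbove (Set.range fun α : Set.Iic (0:ℝ) => Real.exp (q * α) * ‖X α‖))
    (hloc : ∀ T > (0:ℝ), ∃ M : ℝ, ∀ s ∈ Set.Icc 0 T, ‖X s‖ ≤ M)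
    (t : ℝ) (ht : 0 ≤ t) :
    ∫⁻ s in Set.Ioc 0 t, ∫⁻ α, ENNReal.ofReal (Real.exp (lam * s) * ‖X (s + α)‖ ^ p) ∂μ ≤
      (∫⁻ α, ENNReal.ofReal (Real.exp (-(p * q) * α)) ∂μ) / ENNReal.ofReal (p * q - lam) *
          ENNReal.ofReal ((⨆ α : Set.Iic (0:ℝ), Real.exp (q * α) * ‖X α‖) ^ p) +
        (∫⁻ α, ENNReal.ofReal (Real.exp (-(p * q) * α)) ∂μ) *
          ∫⁻ s in Set.Ioc 0 t, ENNReal.ofReal (Real.exp (lam * s) * ‖X s‖ ^ p) := by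
  classical
  set I := ∫⁻ α, ENNReal.ofReal (Real.exp (-(p * q) * α)) ∂μ with hIdef
  set K := ⨆ α : Set.Iic (0:ℝ), Real.exp (q * α) * ‖X α‖ with hKdef
  have hp0 : (0:ℝ) ≤ p := by linarith
  have hc : 0 < p * q - lam := by linarith
  have hK0 : 0 ≤ K := le_trans (by positivity) (le_ciSup hζbdd ⟨0, Set.mem_Iic.2 le_rfl⟩)
  have hbound : ∀ u : ℝ, u ≤ 0 → ‖X u‖ ≤ Real.exp (-(q * u)) * K := by
    intro u hu
    have h := le_ciSup hζbdd ⟨u, Set.mem_Iic.2 hu⟩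
    calc ‖X u‖ = Real.exp (-(q * u)) * (Real.exp (q * u) * ‖X u‖) := by
          rw [← mul_assoc, ← Real.exp_add]; simp
      _ ≤ Real.exp (-(q * u)) * K :=
          mul_le_mul_of_nonneg_left h (Real.exp_pos _).le
  set g : ℝ → ENNReal := fun u => ENNReal.ofReal (Real.exp (lam * u) * ‖X u‖ ^ p) with hgdef
  have hg_meas : Measurable g := by
    apply Measurable.ennreal_ofReal
    exact (Real.measurable_exp.comp (measurable_const.mul measurable_id)).mul
      ((hX.norm).pow_const p)
  have hae : ∀ᵐ α ∂μ, α ≤ 0 := by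
    rw [ae_iff]
    simp only [not_le]; exact hsupp
  -- pointwise bound
  have hpt : ∀ s : ℝ, ∀ α : ℝ, α ≤ 0 →
      ENNReal.ofReal (Real.exp (lam * s) * ‖X (s + α)‖ ^ p) ≤
        ENNReal.ofReal (Real.exp ((lam - p * q) * s) * K ^ p) *
            ENNReal.ofReal (Real.exp (-(p * q) * α)) +
          ENNReal.ofReal (Real.exp (-(p * q) * α)) * (Set.Ioi (0:ℝ)).indicator g (s + α) := by
    intro s α hα
    by_cases h : s + α ≤ 0
    · have hind : (Set.Ioi (0:ℝ)).indicator g (s + α) = 0 := by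
        apply Set.indicator_of_notMem
        simpa using h
      rw [hind, mul_zero, add_zero, ← ENNReal.ofReal_mul (by positivity)]
      apply ENNReal.ofReal_le_ofReal
      have h1 : ‖X (s + α)‖ ^ p ≤ (Real.exp (-(q * (s + α))) * K) ^ p :=
        Real.rpow_le_rpow (norm_nonneg _) (hbound _ h) hp0
      have h2 : (Real.exp (-(q * (s + α))) * K) ^ p
          = Real.exp (-(q * (s + α)) * p) * K ^ p := by
        rw [Real.mul_rpow (Real.exp_pos _).le hK0, ← Real.exp_mul]
      calc Real.exp (lam * s) * ‖X (s + α)‖ ^ p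
          ≤ Real.exp (lam * s) * (Real.exp (-(q * (s + α)) * p) * K ^ p) := by
            rw [← h2]; exact mul_le_mul_of_nonneg_left h1 (Real.exp_pos _).le
        _ = Real.exp ((lam - p * q) * s) * K ^ p * Real.exp (-(p * q) * α) := by
            rw [← mul_assoc, ← Real.exp_add]
            rw [mul_comm _ (Real.exp (-(p * q) * α)), ← mul_assoc, ← Real.exp_add]
            ring_nf
    · push_neg at h
      have hind : (Set.Ioi (0:ℝ)).indicator g (s + α) = g (s + α) :=
        Set.indicator_of_mem h _
      rw [hind]
      refine le_trans ?_ le_add_self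
      rw [hgdef]
      rw [← ENNReal.ofReal_mul (Real.exp_pos _).le]
      apply ENNReal.ofReal_le_ofReal
      rw [← mul_assoc]
      apply mul_le_mul_of_nonneg_right _ (Real.rpow_nonneg (norm_nonneg _) p)
      rw [← Real.exp_add]
      apply Real.exp_le_exp.2
      nlinarith [mul_nonneg (sub_nonneg.2 hlampq.le) (neg_nonneg.2 hα)]
  -- measurable pieces
  have hexp : ∀ c : ℝ, Measurable fun s : ℝ => ENNReal.ofReal (Real.exp (c * s)) := by
    intro c
    exact Measurable.ennreal_ofReal (by fun_prop)
  have hmeasB : Measurable (Function.uncurry fun s α : ℝ =>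
      ENNReal.ofReal (Real.exp (-(p * q) * α)) *
        (Set.Ioi (0:ℝ)).indicator g (s + α)) := by
    apply Measurable.mul
    · exact (Real.measurable_exp.comp (measurable_const.mul measurable_snd)).ennreal_ofReal
    · exact (hg_meas.indicator measurableSet_Ioi).comp (measurable_fst.add measurable_snd)
  -- step 1 : bound the double integral
  have step1 : ∫⁻ s in Set.Ioc 0 t, ∫⁻ α, ENNReal.ofReal (Real.exp (lam * s) * ‖X (s + α)‖ ^ p) ∂μ
      ≤ ∫⁻ s in Set.Ioc 0 t,
          (ENNReal.ofReal (Real.exp ((lam - p * q) * s) * K ^ p) * I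
            + ∫⁻ α, ENNReal.ofReal (Real.exp (-(p * q) * α)) *
                (Set.Ioi (0:ℝ)).indicator g (s + α) ∂μ) := by
    apply lintegral_mono
    intro s
    have h1 : ∫⁻ α, ENNReal.ofReal (Real.exp (lam * s) * ‖X (s + α)‖ ^ p) ∂μ ≤
        ∫⁻ α, (ENNReal.ofReal (Real.exp ((lam - p * q) * s) * K ^ p) *
            ENNReal.ofReal (Real.exp (-(p * q) * α)) +
          ENNReal.ofReal (Real.exp (-(p * q) * α)) * (Set.Ioi (0:ℝ)).indicator g (s + α)) ∂μ := by
      apply lintegral_mono_ae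
      filter_upwards [hae] with α hα
      exact hpt s α hα
    refine h1.trans (le_of_eq ?_)
    rw [lintegral_add_left (by exact (hexp (-(p*q))).const_mul _)]
    rw [lintegral_const_mul _ (hexp (-(p*q)))]
  refine step1.trans ?_
  -- split the sum
  rw [lintegral_add_left (by exact ((Real.measurable_exp.comp
      (measurable_const.mul measurable_id)).mul measurable_const).ennreal_ofReal.mul_const _)]
  have hc' : ENNReal.ofReal (Real.exp (-(p*q-lam) * 0)) ≠ 0 := by simp
  apply add_le_add
  -- first term
  · have e1 : ∀ s : ℝ, ENNReal.ofReal (Real.exp ((lam - p * q) * s) * K ^ p) * I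
        = ENNReal.ofReal (Real.exp ((lam - p * q) * s)) * (ENNReal.ofReal (K ^ p) * I) := by
      intro s
      rw [ENNReal.ofReal_mul (Real.exp_pos _).le, mul_assoc]
    simp only [e1]
    rw [lintegral_mul_const _ (hexp (lam - p * q))]
    have hE : ∫⁻ s in Set.Ioc 0 t, ENNReal.ofReal (Real.exp ((lam - p * q) * s))
        ≤ ENNReal.ofReal (p * q - lam)⁻¹ := by
      refine le_trans (lintegral_mono_set Set.Ioc_subset_Ioi_self) ?_
      have hint : IntegrableOn (fun s : ℝ => Real.exp (-(p * q - lam) * s)) (Set.Ioi 0) :=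
        exp_neg_integrableOn_Ioi 0 hc
      have : ∫⁻ s in Set.Ioi 0, ENNReal.ofReal (Real.exp ((lam - p * q) * s))
          = ENNReal.ofReal (∫ s in Set.Ioi 0, Real.exp (-(p * q - lam) * s)) := by
        rw [ofReal_integral_eq_lintegral_ofReal hint
          (Filter.Eventually.of_forall fun s => (Real.exp_pos _).le)]
        congr 1
        ext s
        ring_nf
      rw [this]
      apply ENNReal.ofReal_le_ofReal
      have hval : ∫ s in Set.Ioi 0, Real.exp (-(p * q - lam) * s) = (p * q - lam)⁻¹ := by
        have := integral_comp_mul_left_Ioi (fun u : ℝ => Real.exp (-u)) 0 hc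
        simp only [mul_zero, neg_mul] at this ⊢
        rw [this, integral_exp_neg_Ioi]
        simp
      rw [hval]
    calc (∫⁻ s in Set.Ioc 0 t, ENNReal.ofReal (Real.exp ((lam - p * q) * s))) *
          (ENNReal.ofReal (K ^ p) * I)
        ≤ ENNReal.ofReal (p * q - lam)⁻¹ * (ENNReal.ofReal (K ^ p) * I) :=
          mul_le_mul_left hE _
      _ = I / ENNReal.ofReal (p * q - lam) * ENNReal.ofReal (K ^ p) := by
          rw [ENNReal.ofReal_inv_of_pos hc, ENNReal.div_eq_inv_mul]
          ring
  -- second term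
  · have hswap : ∫⁻ s in Set.Ioc 0 t, ∫⁻ α, ENNReal.ofReal (Real.exp (-(p * q) * α)) *
        (Set.Ioi (0:ℝ)).indicator g (s + α) ∂μ
        = ∫⁻ α, (∫⁻ s in Set.Ioc 0 t, ENNReal.ofReal (Real.exp (-(p * q) * α)) *
            (Set.Ioi (0:ℝ)).indicator g (s + α)) ∂μ :=
      lintegral_lintegral_swap (μ := volume.restrict (Set.Ioc 0 t)) (ν := μ) hmeasB.aemeasurable
    rw [hswap]
    have hmono : ∀ᵐ α ∂μ, (∫⁻ s in Set.Ioc 0 t, ENNReal.ofReal (Real.exp (-(p * q) * α)) *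
          (Set.Ioi (0:ℝ)).indicator g (s + α))
        ≤ ENNReal.ofReal (Real.exp (-(p * q) * α)) *
            ∫⁻ s in Set.Ioc 0 t, ENNReal.ofReal (Real.exp (lam * s) * ‖X s‖ ^ p) := by
      filter_upwards [hae] with α hα
      have hind_meas : Measurable fun s : ℝ => (Set.Ioi (0:ℝ)).indicator g (s + α) :=
        (hg_meas.indicator measurableSet_Ioi).comp (measurable_add_const α)
      rw [lintegral_const_mul _ hind_meas]
      apply mul_le_mul_right
      have htrans := (measurePreserving_add_right volume α).setLIntegral_comp_emb
        ((Homeomorph.addRight α).measurableEmbedding) ((Set.Ioi (0:ℝ)).indicator g)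
        (Set.Ioc 0 t)
      rw [Set.image_add_const_Ioc] at htrans
      rw [htrans, lintegral_indicator measurableSet_Ioi,
        Measure.restrict_restrict measurableSet_Ioi]
      refine lintegral_mono_set ?_
      intro u hu
      exact ⟨hu.1, le_trans hu.2.2 (by linarith)⟩
    calc ∫⁻ α, (∫⁻ s in Set.Ioc 0 t, ENNReal.ofReal (Real.exp (-(p * q) * α)) *
          (Set.Ioi (0:ℝ)).indicator g (s + α)) ∂μ
        ≤ ∫⁻ α, (ENNReal.ofReal (Real.exp (-(p * q) * α)) *
            ∫⁻ s in Set.Ioc 0 t, ENNReal.ofReal (Real.exp (lam * s) * ‖X s‖ ^ p)) ∂μ :=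
          lintegral_mono_ae hmono
      _ = I * ∫⁻ s in Set.Ioc 0 t, ENNReal.ofReal (Real.exp (lam * s) * ‖X s‖ ^ p) := by
          rw [lintegral_mul_const _ (hexp (-(p*q)))]
end
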